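/- Let A be a unital k-algebra, g ∈ A, let · : A ⊗ R → R be a linear map, w ∈ R, and let q ∈ k be a primitive M-th root of unity (M ≥ 1). For j ∈ ℕ₀, a ∈ A, r ∈ R define D_j(a,r) := Σ_{k=0}^{j} (−1)^k · q^{−k(k−1)/2} · binom(j,k)_{q⁻¹} · w^{j−k} · ((g^k a)·r) · w^k. Then for every j ∈ ℕ₀, writing j = M·j_D + j_R with 0 ≤ j_R < M, one has D_j(a,r) = Σ_{ℓ=0}^{j_D} (−1)^ℓ · C(j_D,ℓ) · w^{M(j_D−ℓ)} · D_{j_R}(g^{Mℓ}a, r) · w^{Mℓ}, where C(j_D,ℓ) is the ordinary binomial coefficient. -/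

import Mathlib

open TensorProduct

noncomputable section

/-- Gaussian ($q$-)binomial coefficients, defined by the recursion
`binom(0,0)_q = 1`, `binom(n,m)_q = 0` for `m > n`,
`binom(n,m)_q = binom(n-1,m)_q + q^(n-m) * binom(n-1,m-1)_q`. -/
def qbinom {K : Type*} [CommRing K] (q : K) : ℕ → ℕ → K
  | 0, 0 => 1
  | 0, _ + 1 => 0
  | n + 1, 0 => qbinom q n 0
  | n + 1, m + 1 => qbinom q n (m + 1) + q ^ (n - m) * qbinom q n m

/-- A (left) partial action of a bialgebra `H` on an algebra `R`:
(PA.1) `1 · r = r`; (PA.2) `h · (r*s) = Σ (h₁ · r)(h₂ · s)`;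
(PA.3) `h · (m · r) = Σ (h₁ · 1)(h₂m · r)`. -/
structure PartialAction (k H R : Type*) [CommSemiring k] [Semiring H] [Bialgebra k H]
    [Semiring R] [Algebra k R] where
  act : H →ₗ[k] R →ₗ[k] R
  unit_act : ∀ r : R, act 1 r = r
  mul_act : ∀ (h : H) (r s : R),
    act h (r * s) = TensorProduct.lift
      ((LinearMap.mul k R).compl₁₂ (act.flip r) (act.flip s)) (Coalgebra.comul (R := k) h)
  act_act : ∀ (h m : H) (r : R),
    act h (act m r) = TensorProduct.lift
      ((LinearMap.mul k R).compl₁₂ (act.flip 1)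
        ((act.flip r).comp (LinearMap.mulRight k m))) (Coalgebra.comul (R := k) h)

/-- Symmetry (PA.S): `h · (m · r) = Σ (h₁m · r)(h₂ · 1)`. -/
def PartialAction.IsSymmetric {k H R : Type*} [CommSemiring k] [Semiring H] [Bialgebra k H]
    [Semiring R] [Algebra k R] (P : PartialAction k H R) : Prop :=
  ∀ (h m : H) (r : R),
    P.act h (P.act m r) = TensorProduct.lift
      ((LinearMap.mul k R).compl₁₂ ((P.act.flip r).comp (LinearMap.mulRight k m))
        (P.act.flip 1)) (Coalgebra.comul (R := k) h)

/-- A grouplike element: `Δ g = g ⊗ g` and `ε g = 1`. -/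
def IsGrouplike (k : Type*) {H : Type*} [CommSemiring k] [Semiring H] [Bialgebra k H]
    (g : H) : Prop :=
  Coalgebra.comul (R := k) g = g ⊗ₜ[k] g ∧ Coalgebra.counit (R := k) g = 1

/-- A `(1,g)`-primitive element: `Δ x = x ⊗ 1 + g ⊗ x`. -/
def IsOneGPrimitive (k : Type*) {H : Type*} [CommSemiring k] [Semiring H] [Bialgebra k H]
    (g x : H) : Prop :=
  Coalgebra.comul (R := k) x = x ⊗ₜ[k] (1 : H) + g ⊗ₜ[k] x

end

/-- The expression `D_j(a,r) = Σ_{i=0}^{j} (-1)^i q^{-i(i-1)/2} binom(j,i)_{q⁻¹}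
w^{j-i} ((gⁱa) · r) wⁱ`. -/
def Dfun {k A R : Type*} [Field k] [Ring A] [Algebra k A] [Ring R] [Algebra k R]
    (act : A →ₗ[k] R →ₗ[k] R) (g : A) (w : R) (q : k) (j : ℕ) (a : A) (r : R) : R :=
  ∑ i ∈ Finset.range (j + 1),
    ((-1 : k) ^ i * q⁻¹ ^ (i * (i - 1) / 2) * qbinom q⁻¹ j i) •
      (w ^ (j - i) * act (g ^ i * a) r * w ^ i)

section QBinomAux
open Polynomial
variable {K : Type*} [Field K]

lemma qbinom_zero_right (q : K) : ∀ n, qbinom q n 0 = 1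
  | 0 => rfl
  | n + 1 => by rw [qbinom]; exact qbinom_zero_right q n

lemma qbinom_eq_zero (q : K) : ∀ n m, n < m → qbinom q n m = 0
  | 0, m + 1, _ => rfl
  | n + 1, m + 1, h => by
    rw [qbinom, qbinom_eq_zero q n (m+1) (by omega), qbinom_eq_zero q n m (by omega)]
    ring

lemma qbinom_self (q : K) : ∀ n, qbinom q n n = 1
  | 0 => rfl
  | n + 1 => by
    rw [qbinom, qbinom_eq_zero q n (n+1) (by omega), qbinom_self q n]
    simp

lemma tri (m : ℕ) : (m + 1) * m / 2 = m * (m - 1) / 2 + m := by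
  have h1 := Nat.choose_two_right (m + 1)
  have h2 := Nat.choose_two_right m
  have h3 : (m+1).choose 2 = m.choose 1 + m.choose 2 := Nat.choose_succ_succ m 1
  simp only [Nat.add_sub_cancel, Nat.choose_one_right] at h1 h2 h3
  omega

noncomputable def Pfun (p : K) (n : ℕ) : Polynomial K :=
  ∏ t ∈ Finset.range n, (X - C (p ^ t))

lemma Pfun_monic (p : K) (n : ℕ) : (Pfun p n).Monic :=
  monic_prod_of_monic _ _ fun _ _ => monic_X_sub_C _

lemma Pfun_natDegree (p : K) (n : ℕ) : (Pfun p n).natDegree = n := by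
  rw [Pfun, natDegree_prod]
  · simp only [natDegree_X_sub_C]
    simp
  · intro t _
    exact X_sub_C_ne_zero _

lemma Pfun_coeff_zero (p : K) : ∀ n, (Pfun p n).coeff 0 = (-1) ^ n * p ^ (n * (n - 1) / 2)
  | 0 => by simp [Pfun]
  | n + 1 => by
    rw [Pfun, Finset.prod_range_succ, ← Pfun, mul_coeff_zero, Pfun_coeff_zero p n]
    simp only [coeff_sub, coeff_X_zero, coeff_C_zero, zero_sub]
    rw [show (n+1) * (n+1-1) / 2 = n * (n-1) / 2 + n from by simpa using tri n]
    ring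

lemma Pfun_coeff (p : K) :
    ∀ n i, i ≤ n → (Pfun p n).coeff (n - i) = (-1) ^ i * p ^ (i * (i - 1) / 2) * qbinom p n i
  | 0, 0, _ => by simp [Pfun, qbinom]
  | n + 1, 0, _ => by
    have h := (Pfun_monic p (n+1)).coeff_natDegree
    rw [Pfun_natDegree] at h
    simp [h, qbinom_zero_right]
  | n + 1, i + 1, hi => by
    rcases Nat.lt_or_ge (i + 1) (n + 1) with h | h
    · -- 1 ≤ i+1 ≤ n
      have hin : i + 1 ≤ n := by omega
      have e1 : n + 1 - (i + 1) = (n - (i+1)) + 1 := by omega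
      have e2 : n - (i + 1) + 1 = n - i := by omega
      rw [Pfun, Finset.prod_range_succ, ← Pfun, e1, coeff_mul_X_sub_C, e2,
        Pfun_coeff p n (i+1) hin]
      have hni : (Pfun p n).coeff (n - i) = (-1) ^ i * p ^ (i * (i - 1) / 2) * qbinom p n i :=
        Pfun_coeff p n i (by omega)
      rw [hni, qbinom]
      rw [show (i+1) * (i+1-1) / 2 = i * (i-1) / 2 + i from by simpa using tri i]
      have hps : p ^ i * p ^ (i * (i-1) / 2) * p ^ (n - i) = p ^ (i * (i-1) / 2) * p ^ n := by
        rw [← pow_add, ← pow_add, ← pow_add]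
        congr 1
        omega
      rw [pow_succ (-1:K) i]
      linear_combination ((-1:K)^i * qbinom p n i) * hps
    · -- i + 1 = n + 1
      have : i = n := by omega
      subst this
      rw [Nat.sub_self, Pfun_coeff_zero, qbinom_self, mul_one]

lemma prod_shift {M : ℕ} {p : K} (hM : 0 < M) (hp : IsPrimitiveRoot p M) (a : ℕ) :
    ∏ s ∈ Finset.range M, (X - C (p ^ (a + s))) = X ^ M - 1 := by
  classical
  have hp0 : p ≠ 0 := fun h => by
    have h1 := hp.pow_eq_one
    rw [h, zero_pow hM.ne'] at h1
    exact zero_ne_one h1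
  have hinj : ∀ x ∈ Finset.range M, ∀ y ∈ Finset.range M,
      (fun s => p ^ (a + s)) x = (fun s => p ^ (a + s)) y → x = y := by
    intro s hs t ht hst
    simp only [Finset.mem_range] at hs ht
    simp only [pow_add] at hst
    exact hp.pow_inj hs ht (mul_left_cancel₀ (pow_ne_zero a hp0) hst)
  have himg : (Finset.range M).image (fun s => p ^ (a + s)) = nthRootsFinset M (1 : K) := by
    apply Finset.eq_of_subset_of_card_le
    · intro x hx
      simp only [Finset.mem_image, Finset.mem_range] at hx
      obtain ⟨s, _, rfl⟩ := hx
      rw [mem_nthRootsFinset hM (1 : K), ← pow_mul, mul_comm, pow_mul, hp.pow_eq_one, one_pow]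
    · rw [hp.card_nthRootsFinset,
        Finset.card_image_of_injOn (fun x hx y hy h => hinj x (Finset.mem_coe.mp hx)
          y (Finset.mem_coe.mp hy) h),
        Finset.card_range]
  rw [X_pow_sub_one_eq_prod hM hp, ← himg, Finset.prod_image hinj]

lemma Pfun_split {M : ℕ} {p : K} (hM : 0 < M) (hp : IsPrimitiveRoot p M) (d r : ℕ) :
    Pfun p (M * d + r) = (X ^ M - 1) ^ d * Pfun p r := by
  induction d with
  | zero => simp [Pfun]
  | succ d ih =>
    rw [show M * (d+1) + r = (M * d + r) + M from by ring, Pfun, Finset.prod_range_add,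
      ← Pfun, ih, ← prod_shift hM hp (M*d+r)]
    ring

lemma key {M : ℕ} {p : K} (hM : 0 < M) (hp : IsPrimitiveRoot p M) (jD jR : ℕ) (hjR : jR < M)
    (l m : ℕ) (hl : l ≤ jD) (hm : m < M) :
    (-1:K) ^ (M*l+m) * p ^ ((M*l+m) * ((M*l+m) - 1) / 2) * qbinom p (M*jD+jR) (M*l+m)
      = ((-1:K) ^ l * (jD.choose l : K)) *
        ((-1:K) ^ m * p ^ (m * (m-1) / 2) * qbinom p jR m) := by
  have hMl : M * l ≤ M * jD := Nat.mul_le_mul_left M hl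
  by_cases hij : M*l+m ≤ M*jD+jR
  case neg =>
    rw [qbinom_eq_zero p (M*jD+jR) (M*l+m) (by omega), qbinom_eq_zero p jR m (by omega)]
    ring
  case pos =>
    have hMd : M * (jD - l) + M * l = M * jD := by
      rw [← Nat.mul_add, Nat.sub_add_cancel hl]
    rw [← Pfun_coeff p (M*jD+jR) (M*l+m) hij, Pfun_split hM hp jD jR, sub_pow,
      Finset.sum_mul, finset_sum_coeff]
    have hsum : ∀ t ∈ Finset.range (jD+1),
        ((-1:K[X])^(t+jD) * (X^M)^t * (1:K[X])^(jD-t) * (jD.choose t : K[X]) * Pfun p jR).coeff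
            (M*jD+jR - (M*l+m))
        = (-1:K)^(t+jD) * (jD.choose t : K) *
            (if M*t ≤ M*jD+jR - (M*l+m) then (Pfun p jR).coeff (M*jD+jR - (M*l+m) - M*t)
             else 0) := by
      intro t _
      rw [show ((-1:K[X])^(t+jD) * (X^M)^t * (1:K[X])^(jD-t) * (jD.choose t : K[X]) * Pfun p jR)
          = C ((-1:K)^(t+jD) * (jD.choose t : K)) * (X^(M*t) * Pfun p jR) from by
        simp only [one_pow, mul_one, ← pow_mul, map_mul, map_pow, map_neg, map_one,
          C_eq_natCast]
        ring]
      rw [coeff_C_mul, coeff_X_pow_mul']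
    rw [Finset.sum_congr rfl hsum]
    rw [Finset.sum_eq_single (jD - l)]
    · -- main term
      by_cases hmR : m ≤ jR
      · rw [if_pos (by omega), show M*jD+jR - (M*l+m) - M*(jD-l) = jR - m from by omega,
          Pfun_coeff p jR m hmR, Nat.choose_symm hl,
          show jD - l + jD = l + 2*(jD-l) from by omega, pow_add, pow_mul, neg_one_sq,
          one_pow, mul_one]
      · rw [if_neg (by omega), qbinom_eq_zero p jR m (by omega)]
        ring
    · -- other terms vanish
      intro t ht hne
      simp only [Finset.mem_range] at ht
      rcases Nat.lt_or_ge t (jD - l) with h1 | h1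
      · have h2 : M * (t+1) ≤ M * (jD - l) := Nat.mul_le_mul_left M (by omega)
        have h3 : M * (t+1) = M * t + M := by ring
        rw [if_pos (by omega),
          coeff_eq_zero_of_natDegree_lt (by rw [Pfun_natDegree]; omega), mul_zero]
      · have h1' : jD - l < t := by omega
        have h2 : M * ((jD - l) + 1) ≤ M * t := Nat.mul_le_mul_left M (by omega)
        have h3 : M * ((jD - l) + 1) = M * (jD - l) + M := by ring
        rw [if_neg (by omega), mul_zero]
    · intro h
      exact absurd (Finset.mem_range.mpr (by omega)) h

end QBinomAux

section auxx
open Polynomial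
variable {K : Type*} [Field K]

lemma einj {M l m l' m' : ℕ} (hm : m < M) (hm' : m' < M) (h : M*l+m = M*l'+m') :
    l = l' ∧ m = m' := by
  rcases lt_trichotomy l l' with h1 | h1 | h1
  · have h2 : M * (l+1) ≤ M * l' := Nat.mul_le_mul_left M (by omega)
    have h3 : M * (l+1) = M * l + M := by ring
    omega
  · subst h1; omega
  · have h2 : M * (l'+1) ≤ M * l := Nat.mul_le_mul_left M (by omega)
    have h3 : M * (l'+1) = M * l' + M := by ring
    omega

end auxx

/-- Lemma 3.5(i): if `q` is a primitive `M`-th root of unity and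
`j = M j_D + j_R` with `j_R < M`, then
`D_j(a,r) = Σ_{ℓ=0}^{j_D} (-1)^ℓ C(j_D,ℓ) w^{M(j_D-ℓ)} D_{j_R}(g^{Mℓ}a, r) w^{Mℓ}`. -/
theorem stmt9 {k A R : Type*} [Field k] [IsAlgClosed k] [CharZero k]
    [Ring A] [Algebra k A] [Ring R] [Algebra k R]
    (act : A →ₗ[k] R →ₗ[k] R) (g : A) (w : R)
    (q : k) (M : ℕ) (hM : 1 ≤ M) (hq : IsPrimitiveRoot q M) :
    ∀ (j jD jR : ℕ), j = M * jD + jR → jR < M → ∀ (a : A) (r : R),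
      Dfun act g w q j a r =
        ∑ l ∈ Finset.range (jD + 1),
          ((-1 : k) ^ l * (jD.choose l : k)) •
            (w ^ (M * (jD - l)) * Dfun act g w q jR (g ^ (M * l) * a) r * w ^ (M * l)) := by
  intro j jD jR hj hjR a r
  subst hj
  classical
  have hM0 : 0 < M := hM
  have hp : IsPrimitiveRoot q⁻¹ M := hq.inv
  set F : ℕ → R := fun i =>
    ((-1 : k) ^ i * q⁻¹ ^ (i * (i - 1) / 2) * qbinom q⁻¹ (M * jD + jR) i) •
      (w ^ (M * jD + jR - i) * act (g ^ i * a) r * w ^ i) with hF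
  have hrhs : ∀ l ∈ Finset.range (jD + 1),
      ((-1 : k) ^ l * (jD.choose l : k)) •
        (w ^ (M * (jD - l)) * Dfun act g w q jR (g ^ (M * l) * a) r * w ^ (M * l))
      = ∑ m ∈ Finset.range (jR + 1), F (M * l + m) := by
    intro l hl
    simp only [Finset.mem_range] at hl
    have hl' : l ≤ jD := by omega
    have hMd : M * (jD - l) + M * l = M * jD := by
      rw [← Nat.mul_add, Nat.sub_add_cancel hl']
    rw [Dfun, Finset.mul_sum, Finset.sum_mul, Finset.smul_sum]
    refine Finset.sum_congr rfl fun m hm => ?_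
    simp only [Finset.mem_range] at hm
    have hm' : m ≤ jR := by omega
    rw [mul_smul_comm, smul_mul_assoc, smul_smul]
    have hg : g ^ m * (g ^ (M * l) * a) = g ^ (M * l + m) * a := by
      rw [← mul_assoc, ← pow_add, Nat.add_comm]
    rw [hg]
    have hw : w ^ (M * (jD - l)) * (w ^ (jR - m) * act (g ^ (M * l + m) * a) r * w ^ m)
          * w ^ (M * l)
        = w ^ (M * jD + jR - (M * l + m)) * act (g ^ (M * l + m) * a) r * w ^ (M * l + m) := by
      rw [mul_assoc (w ^ (M * (jD - l)))]
      rw [mul_assoc (w ^ (jR - m) * act (g ^ (M * l + m) * a) r) (w ^ m) (w ^ (M * l))]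
      rw [← pow_add w m (M * l)]
      rw [← mul_assoc (w ^ (M * (jD - l)))]
      rw [← mul_assoc (w ^ (M * (jD - l))) (w ^ (jR - m))]
      rw [← pow_add w (M * (jD - l)) (jR - m)]
      rw [show M * (jD - l) + (jR - m) = M * jD + jR - (M * l + m) from by omega,
        show m + M * l = M * l + m from Nat.add_comm m (M * l)]
    rw [hw, ← key hM0 hp jD jR hjR l m hl' (by omega : m < M), hF]
  have hsub : (Finset.range (jD + 1) ×ˢ Finset.range (jR + 1)).image (fun x => M * x.1 + x.2)
      ⊆ Finset.range (M * jD + jR + 1) := by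
    intro i hi
    simp only [Finset.mem_image, Finset.mem_product, Finset.mem_range] at hi
    obtain ⟨⟨l', m'⟩, ⟨hl', hm'⟩, rfl⟩ := hi
    have h2 : M * l' ≤ M * jD := Nat.mul_le_mul_left M (by omega)
    show M * l' + m' ∈ Finset.range (M * jD + jR + 1)
    exact Finset.mem_range.mpr (by omega)
  have hq0 : q ≠ 0 := fun h => by
    have h1 := hq.pow_eq_one
    rw [h, zero_pow hM0.ne'] at h1
    exact zero_ne_one h1
  have hzero : ∀ i ∈ Finset.range (M * jD + jR + 1),
      i ∉ (Finset.range (jD + 1) ×ˢ Finset.range (jR + 1)).image (fun x => M * x.1 + x.2)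
      → F i = 0 := by
    intro i hi hni
    simp only [Finset.mem_range] at hi
    simp only [Finset.mem_image, Finset.mem_product, Finset.mem_range] at hni
    have hiM : i % M < M := Nat.mod_lt _ hM0
    have hdiv : M * (i / M) + i % M = i := Nat.div_add_mod i M
    have hlD : i / M ≤ jD := by
      by_contra hcon
      have h2 : M * (jD + 1) ≤ M * (i / M) := Nat.mul_le_mul_left M (by omega)
      have h3 : M * (jD + 1) = M * jD + M := by ring
      omega
    have hmR : jR < i % M := by
      by_contra hcon
      exact hni ⟨(i / M, i % M), ⟨by omega, by omega⟩, hdiv⟩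
    have hz : qbinom q⁻¹ (M * jD + jR) i = 0 := by
      have hk := key hM0 hp jD jR hjR (i / M) (i % M) hlD hiM
      rw [hdiv, qbinom_eq_zero q⁻¹ jR (i % M) hmR] at hk
      have h0 : (-1 : k) ^ i * q⁻¹ ^ (i * (i - 1) / 2) * qbinom q⁻¹ (M * jD + jR) i = 0 := by
        rw [hk]; ring
      rcases mul_eq_zero.mp h0 with h1 | h1
      · rcases mul_eq_zero.mp h1 with h2 | h2
        · exact absurd h2 (pow_ne_zero _ (neg_ne_zero.mpr one_ne_zero))
        · exact absurd h2 (pow_ne_zero _ (inv_ne_zero hq0))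
      · exact h1
    rw [hF]
    simp [hz]
  have hinj : ∀ x ∈ Finset.range (jD + 1) ×ˢ Finset.range (jR + 1),
      ∀ y ∈ Finset.range (jD + 1) ×ˢ Finset.range (jR + 1),
      (fun x => M * x.1 + x.2) x = (fun x => M * x.1 + x.2) y → x = y := by
    rintro ⟨a1, b1⟩ hx ⟨a2, b2⟩ hy hxy
    simp only [Finset.mem_product, Finset.mem_range] at hx hy
    simp only at hxy
    obtain ⟨h1, h2⟩ := einj (by omega : b1 < M) (by omega : b2 < M) hxy
    simp [h1, h2]
  calc Dfun act g w q (M * jD + jR) a r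
      = ∑ i ∈ Finset.range (M * jD + jR + 1), F i := by rw [Dfun]
    _ = ∑ i ∈ (Finset.range (jD + 1) ×ˢ Finset.range (jR + 1)).image
          (fun x => M * x.1 + x.2), F i := (Finset.sum_subset hsub hzero).symm
    _ = ∑ x ∈ Finset.range (jD + 1) ×ˢ Finset.range (jR + 1), F (M * x.1 + x.2) :=
        Finset.sum_image hinj
    _ = ∑ l ∈ Finset.range (jD + 1), ∑ m ∈ Finset.range (jR + 1), F (M * l + m) := by
        rw [Finset.sum_product]
    _ = ∑ l ∈ Finset.range (jD + 1),
          ((-1 : k) ^ l * (jD.choose l : k)) •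
            (w ^ (M * (jD - l)) * Dfun act g w q jR (g ^ (M * l) * a) r * w ^ (M * l)) :=
        Finset.sum_congr rfl fun l hl => (hrhs l hl).symm
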